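/- In the abstract framework, let V_h ⊆ V and Q_h ⊆ Q be linear subspaces with C(Q_h) ⊆ V_h, let B_h : H × H → ℝ be a symmetric positive-semidefinite bilinear form, and set K_h := {v ∈ V_h : B_h(ι v, ι (C q)) = 0 for all q ∈ Q_h}. Let α > 0 satisfy the ellipticity in the discrete kernel: ⟨D v, D v⟩_W ≥ α ‖v‖_V² for all v ∈ K_h. Let f ∈ H, and suppose (u,p) ∈ V × Q satisfies ⟨D u, D v⟩_W + ⟨ι v, ι (C p)⟩_H = ⟨f, ι v⟩_H for all v ∈ V and ⟨ι u, ι (C q)⟩_H = 0 for all q ∈ Q, while (u_h, p_h) ∈ V_h × Q_h satisfies ⟨D u_h, D v⟩_W + B_h(ι v, ι (C p_h)) = B_h(f, ι v) for all v ∈ V_h and B_h(ι u_h, ι (C q)) = 0 for all q ∈ Q_h. Assume there are constants E₁, E₂, E₃ ≥ 0 such that: (SA) there exists u^I ∈ K_h with ‖u − u^I‖_V ≤ E₂; (WA) |⟨ι v, ι (C p)⟩_H| ≤ E₁ ‖v‖_V for all v ∈ K_h; (consistency) |⟨f, ι v⟩_H − B_h(f, ι v)| ≤ E₃ ‖v‖_V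 for all v ∈ K_h. Then ‖u − u_h‖_V ≤ (1 + 1/α) E₂ + (E₁ + E₃)/α. -/

import Mathlib

/-- Abstract form of the paper's theorem on the convergence of the discrete
solution operators T_h to T, applied to a datum f: the error between the
continuous and the discrete mixed-problem solutions is controlled by the
strong approximability (SA), weak approximability (WA) and consistency bounds. -/
theorem uniform_convergence_solution_operator
    {H W V Q : Type*}
    [NormedAddCommGroup H] [InnerProductSpace ℝ H] [CompleteSpace H]
    [NormedAddCommGroup W] [InnerProductSpace ℝ W] [CompleteSpace W]
    [NormedAddCommGroup V] [InnerProductSpace ℝ V] [CompleteSpace V]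
    [NormedAddCommGroup Q] [InnerProductSpace ℝ Q] [CompleteSpace Q]
    (ι : V →L[ℝ] H) (D : V →L[ℝ] W) (C : Q →L[ℝ] V)
    (hnorm : ∀ v : V, ‖v‖ ^ 2 = ‖ι v‖ ^ 2 + ‖D v‖ ^ 2)
    (hDC : ∀ q : Q, D (C q) = 0)
    (Vh : Submodule ℝ V) (Qh : Submodule ℝ Q)
    (hCQ : ∀ q ∈ Qh, C q ∈ Vh)
    (Bh : H →ₗ[ℝ] H →ₗ[ℝ] ℝ)
    (hBsymm : ∀ x y : H, Bh x y = Bh y x)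
    (hBpos : ∀ x : H, 0 ≤ Bh x x)
    -- the discrete rotation-free kernel
    (Kh : Set V)
    (hKh : Kh = {v : V | v ∈ Vh ∧ ∀ q ∈ Qh, Bh (ι v) (ι (C q)) = 0})
    -- ellipticity in the discrete kernel
    (α : ℝ) (hα : 0 < α)
    (hEDK : ∀ v ∈ Kh, (inner ℝ (D v) (D v) : ℝ) ≥ α * ‖v‖ ^ 2)
    -- the continuous mixed source problem
    (f : H) (u : V) (p : Q)
    (hcont1 : ∀ v : V,
      (inner ℝ (D u) (D v) : ℝ) + (inner ℝ (ι v) (ι (C p)) : ℝ) = (inner ℝ f (ι v) : ℝ))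
    (hcont2 : ∀ q : Q, (inner ℝ (ι u) (ι (C q)) : ℝ) = 0)
    -- the discrete mixed source problem
    (u_h : V) (p_h : Q) (hu_h : u_h ∈ Vh) (hp_h : p_h ∈ Qh)
    (hdisc1 : ∀ v ∈ Vh,
      (inner ℝ (D u_h) (D v) : ℝ) + Bh (ι v) (ι (C p_h)) = Bh f (ι v))
    (hdisc2 : ∀ q ∈ Qh, Bh (ι u_h) (ι (C q)) = 0)
    -- the three error bounds
    (E₁ E₂ E₃ : ℝ) (hE₁ : 0 ≤ E₁) (hE₂ : 0 ≤ E₂) (hE₃ : 0 ≤ E₃)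
    (hSA : ∃ uI ∈ Kh, ‖u - uI‖ ≤ E₂)
    (hWA : ∀ v ∈ Kh, |(inner ℝ (ι v) (ι (C p)) : ℝ)| ≤ E₁ * ‖v‖)
    (hcons : ∀ v ∈ Kh, |(inner ℝ f (ι v) : ℝ) - Bh f (ι v)| ≤ E₃ * ‖v‖) :
    ‖u - u_h‖ ≤ (1 + 1 / α) * E₂ + (E₁ + E₃) / α := by

  obtain ⟨uI, huIK, huIE⟩ := hSA
  have huIVh : uI ∈ Vh := by rw [hKh] at huIK; exact huIK.1
  have huIB : ∀ q ∈ Qh, Bh (ι uI) (ι (C q)) = 0 := by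
    rw [hKh] at huIK; exact huIK.2
  set v : V := u_h - uI with hv
  have hvVh : v ∈ Vh := Vh.sub_mem hu_h huIVh
  have hvK : v ∈ Kh := by
    rw [hKh]
    refine ⟨hvVh, fun q hq => ?_⟩
    simp only [hv, map_sub, LinearMap.sub_apply, hdisc2 q hq, huIB q hq, sub_zero]
  -- D is norm-nonincreasing
  have hDnorm : ∀ w : V, ‖D w‖ ≤ ‖w‖ := by
    intro w
    nlinarith [hnorm w, norm_nonneg (ι w), norm_nonneg (D w), norm_nonneg w,
      sq_nonneg (‖ι w‖)]
  -- the key identity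
  have hBvp : Bh (ι v) (ι (C p_h)) = 0 := by
    simp only [hv, map_sub, LinearMap.sub_apply, hdisc2 p_h hp_h, huIB p_h hp_h, sub_zero]
  have h1 : (inner ℝ (D u_h) (D v) : ℝ) = Bh f (ι v) := by
    have := hdisc1 v hvVh
    rw [hBvp] at this; linarith
  have h2 : (inner ℝ (D u) (D v) : ℝ) = (inner ℝ f (ι v) : ℝ) - (inner ℝ (ι v) (ι (C p)) : ℝ) := by
    have := hcont1 v; linarith
  have hid : (inner ℝ (D v) (D v) : ℝ)
      = (Bh f (ι v) - (inner ℝ f (ι v) : ℝ)) + (inner ℝ (ι v) (ι (C p)) : ℝ)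
        + (inner ℝ (D (u - uI)) (D v) : ℝ) := by
    have e1 : D v = D u_h - D uI := by rw [hv, map_sub]
    have e2 : D (u - uI) = D u - D uI := by rw [map_sub]
    rw [e1, e2, inner_sub_left, inner_sub_left, ← e1, h1, h2]
    ring
  -- bound the three terms
  have hb1 : Bh f (ι v) - (inner ℝ f (ι v) : ℝ) ≤ E₃ * ‖v‖ := by
    have := hcons v hvK
    have := abs_le.mp this
    linarith [this.1]
  have hb2 : (inner ℝ (ι v) (ι (C p)) : ℝ) ≤ E₁ * ‖v‖ :=
    le_trans (le_abs_self _) (hWA v hvK)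
  have hb3 : (inner ℝ (D (u - uI)) (D v) : ℝ) ≤ ‖u - uI‖ * ‖v‖ := by
    calc (inner ℝ (D (u - uI)) (D v) : ℝ) ≤ ‖D (u - uI)‖ * ‖D v‖ := real_inner_le_norm _ _
      _ ≤ ‖u - uI‖ * ‖v‖ :=
        mul_le_mul (hDnorm _) (hDnorm _) (norm_nonneg _) (norm_nonneg _)
  have key : α * ‖v‖ ^ 2 ≤ (E₃ + E₁ + ‖u - uI‖) * ‖v‖ := by
    have := hEDK v hvK
    nlinarith
  have hvb : α * ‖v‖ ≤ E₃ + E₁ + ‖u - uI‖ := by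
    rcases (norm_nonneg v).eq_or_lt.imp Eq.symm id with h0 | h0
    · rw [h0, mul_zero]
      positivity
    · nlinarith
  have hvb2 : ‖v‖ ≤ (E₁ + E₃ + E₂) / α := by
    rw [le_div_iff₀ hα]
    nlinarith
  have htri : ‖u - u_h‖ ≤ ‖u - uI‖ + ‖v‖ := by
    have e : u - u_h = (u - uI) - v := by rw [hv]; abel
    rw [e]; exact norm_sub_le _ _
  have hrhs : (1 + 1 / α) * E₂ + (E₁ + E₃) / α = E₂ + (E₁ + E₃ + E₂) / α := by
    field_simp; ring
  rw [hrhs]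
  linarith
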